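/- (Decomposition of the convex estimator of M.) Let n, r be positive integers and λ > 0. Let M*, E, Z ∈ ℝ^{n×n} with Z ∈ {0,1}^{n×n}, τ* ∈ ℝ, and O := M* + τ*Z + E. Suppose M̂ ∈ ℝ^{n×n} has an SVD M̂ = ÛΣ̂V̂ᵀ with Û, V̂ ∈ ℝ^{n×r} having orthonormal columns, let P_{T̂⊥}(A) := (I − ÛÛᵀ)A(I − V̂V̂ᵀ) and P_{T̂}(A) := A − P_{T̂⊥}(A), and suppose ‖P_{T̂⊥}(Z)‖_F > 0. Suppose τ̂ ∈ ℝ and W ∈ ℝ^{n×n} satisfy the first-order optimality conditions: ⟨Z, O − M̂ − τ̂Z⟩ = 0; O − M̂ − τ̂Z = λ(ÛV̂ᵀ + W); and P_{T̂⊥}(W) = W. Then M̂ − M* = −λÛV̂ᵀ − (λ⟨Z, ÛV̂ᵀ⟩/‖P_{T̂⊥}(Z)‖_F²)·P_{T̂}(Z) − (⟨P_{T̂⊥}(Z), E⟩/‖P_{T̂⊥}(Z)‖_F² + ⟨Z, P_{T̂⊥}(M*)⟩/‖P_{T̂⊥}(Z)‖_F²)·P_{T̂}(Z) − P_{T̂⊥}(M*)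 + P_{T̂}(E). -/

import Mathlib

noncomputable section
open Matrix MeasureTheory

namespace Paper

/-- Frobenius (trace) inner product `⟨A,B⟩ = tr(Aᵀ B)`. -/
def finner {m k : Type*} [Fintype m] [Fintype k] (A B : Matrix m k ℝ) : ℝ :=
  Matrix.trace (Aᵀ * B)

/-- Frobenius norm `‖A‖_F`. -/
def fnorm {m k : Type*} [Fintype m] [Fintype k] (A : Matrix m k ℝ) : ℝ :=
  Real.sqrt (finner A A)

/-- Entrywise max norm `‖A‖_∞`. -/
def infNorm {m k : Type*} [Fintype m] [Fintype k] (A : Matrix m k ℝ) : ℝ :=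
  ⨆ i, ⨆ j, |A i j|

/-- Maximum row ℓ₂-norm `‖A‖_{2,∞}`. -/
def rowNorm {m k : Type*} [Fintype m] [Fintype k] (A : Matrix m k ℝ) : ℝ :=
  ⨆ i, Real.sqrt (∑ j, A i j ^ 2)

/-- The (unordered) singular values of a real matrix: the square roots of the
eigenvalues of `Aᴴ * A`. -/
def svals {m k : Type*} [Fintype m] [Fintype k] [DecidableEq k] (A : Matrix m k ℝ) : k → ℝ :=
  fun j => Real.sqrt ((Matrix.isHermitian_conjTranspose_mul_self A).eigenvalues j)

/-- Spectral (ℓ₂ operator) norm: the largest singular value. -/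
def specNorm {m k : Type*} [Fintype m] [Fintype k] [DecidableEq k] (A : Matrix m k ℝ) : ℝ :=
  ⨆ j, svals A j

/-- Nuclear norm `‖A‖_*`: the sum of the singular values. -/
def nucNorm {m k : Type*} [Fintype m] [Fintype k] [DecidableEq k] (A : Matrix m k ℝ) : ℝ :=
  ∑ j, svals A j

/-- The `i`-th largest singular value (singular values in descending order). -/
def svalDesc {m k : ℕ} (A : Matrix (Fin m) (Fin k) ℝ) (i : Fin k) : ℝ :=
  svals A (Tuple.sort (svals A) i.rev)

/-- Projection onto the orthogonal complement of the tangent space determined by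
matrices `U, V` with orthonormal columns: `P_{T⊥}(A) = (I − UUᵀ)A(I − VVᵀ)`. -/
def PTperp {n r : Type*} [Fintype n] [Fintype r] [DecidableEq n]
    (U V : Matrix n r ℝ) (A : Matrix n n ℝ) : Matrix n n ℝ :=
  (1 - U * Uᵀ) * A * (1 - V * Vᵀ)

/-- Projection onto the tangent space: `P_T(A) = A − P_{T⊥}(A)`. -/
def PTang {n r : Type*} [Fintype n] [Fintype r] [DecidableEq n]
    (U V : Matrix n r ℝ) (A : Matrix n n ℝ) : Matrix n n ℝ :=
  A - PTperp U V A

/-- Rank-one versions of the tangent space projections, built from unit vectors. -/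
def PTperpVec {n : Type*} [Fintype n] [DecidableEq n]
    (u v : n → ℝ) (A : Matrix n n ℝ) : Matrix n n ℝ :=
  (1 - Matrix.vecMulVec u u) * A * (1 - Matrix.vecMulVec v v)

def PTangVec {n : Type*} [Fintype n] [DecidableEq n]
    (u v : n → ℝ) (A : Matrix n n ℝ) : Matrix n n ℝ :=
  A - PTperpVec u v A

/-- A `{0,1}`-valued (treatment) matrix. -/
def IsBinary {n : Type*} (Z : Matrix n n ℝ) : Prop := ∀ i j, Z i j = 0 ∨ Z i j = 1

/-- Sub-Gaussian with ψ₂-Orlicz norm at most `σ`: `E exp((X/σ)²) ≤ 2`. -/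
def SubGaussianLe {Ω : Type*} [MeasurableSpace Ω] (μ : Measure Ω) (X : Ω → ℝ) (σ : ℝ) : Prop :=
  ∫ ω, Real.exp ((X ω / σ) ^ 2) ∂μ ≤ 2

/-- A compact singular value decomposition `M = U (diag s) Vᵀ` with orthonormal columns
and strictly positive singular values. -/
def IsCompactSVD {n r : ℕ} (M : Matrix (Fin n) (Fin n) ℝ)
    (U : Matrix (Fin n) (Fin r) ℝ) (s : Fin r → ℝ) (V : Matrix (Fin n) (Fin r) ℝ) : Prop :=
  Uᵀ * U = 1 ∧ Vᵀ * V = 1 ∧ (∀ i, 0 < s i) ∧ M = U * Matrix.diagonal s * Vᵀ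

/-- Objective of the convex program `g(M, τ)`. -/
def gval {n : ℕ} (O Z : Matrix (Fin n) (Fin n) ℝ) (lam : ℝ)
    (M : Matrix (Fin n) (Fin n) ℝ) (τ : ℝ) : ℝ :=
  1 / 2 * fnorm (O - M - τ • Z) ^ 2 + lam * nucNorm M

/-- `τ(X,Y) = ⟨Z, O − XYᵀ⟩ / ‖Z‖_F²`. -/
def tauOf {n r : ℕ} (Z O : Matrix (Fin n) (Fin n) ℝ)
    (X Y : Matrix (Fin n) (Fin r) ℝ) : ℝ :=
  finner Z (O - X * Yᵀ) / fnorm Z ^ 2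

/-- `∇_X f(X,Y;τ)`. -/
def gradX {n r : ℕ} (Z O : Matrix (Fin n) (Fin n) ℝ) (lam : ℝ)
    (X Y : Matrix (Fin n) (Fin r) ℝ) (τ : ℝ) : Matrix (Fin n) (Fin r) ℝ :=
  (X * Yᵀ + τ • Z - O) * Y + lam • X

/-- `∇_Y f(X,Y;τ)`. -/
def gradY {n r : ℕ} (Z O : Matrix (Fin n) (Fin n) ℝ) (lam : ℝ)
    (X Y : Matrix (Fin n) (Fin r) ℝ) (τ : ℝ) : Matrix (Fin n) (Fin r) ℝ :=
  (X * Yᵀ + τ • Z - O)ᵀ * X + lam • Y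

/-- `∇f(X,Y;τ) ∈ ℝ^{2n×r}`: the vertical stacking of `∇_X f` and `∇_Y f`. -/
def gradf {n r : ℕ} (Z O : Matrix (Fin n) (Fin n) ℝ) (lam : ℝ)
    (X Y : Matrix (Fin n) (Fin r) ℝ) (τ : ℝ) : Matrix (Fin n ⊕ Fin n) (Fin r) ℝ :=
  Matrix.fromRows (gradX Z O lam X Y τ) (gradY Z O lam X Y τ)

/-- The non-convex objective `f(X,Y;τ)`. -/
def fval {n r : ℕ} (Z O : Matrix (Fin n) (Fin n) ℝ) (lam : ℝ)
    (X Y : Matrix (Fin n) (Fin r) ℝ) (τ : ℝ) : ℝ :=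
  1 / 2 * fnorm (O - X * Yᵀ - τ • Z) ^ 2 + lam / 2 * fnorm X ^ 2 + lam / 2 * fnorm Y ^ 2

/-- Algorithm 1 (alternating gradient descent); `τᵗ` is always `tauOf Z O Xᵗ Yᵗ`. -/
def gdIter {n r : ℕ} (Z O : Matrix (Fin n) (Fin n) ℝ) (lam η : ℝ)
    (X0 Y0 : Matrix (Fin n) (Fin r) ℝ) :
    ℕ → Matrix (Fin n) (Fin r) ℝ × Matrix (Fin n) (Fin r) ℝ
  | 0 => (X0, Y0)
  | t + 1 =>
      let p := gdIter Z O lam η X0 Y0 t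
      let τ := tauOf Z O p.1 p.2
      (p.1 - η • gradX Z O lam p.1 p.2 τ, p.2 - η • gradY Z O lam p.1 p.2 τ)

/-- Vertical stacking `F = [X; Y] ∈ ℝ^{2n×r}`. -/
def stack {n r : ℕ} (X Y : Matrix (Fin n) (Fin r) ℝ) : Matrix (Fin n ⊕ Fin n) (Fin r) ℝ :=
  Matrix.fromRows X Y

/-- `H` is an optimal rotation aligning `F` with `Fstar`:
it is orthogonal and minimizes `‖F R − Fstar‖_F` over orthogonal `R`. -/
def IsMinRot {n r : ℕ} (F Fstar : Matrix (Fin n ⊕ Fin n) (Fin r) ℝ)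
    (H : Matrix (Fin r) (Fin r) ℝ) : Prop :=
  Hᵀ * H = 1 ∧ ∀ R : Matrix (Fin r) (Fin r) ℝ, Rᵀ * R = 1 →
    fnorm (F * H - Fstar) ≤ fnorm (F * R - Fstar)


lemma finner_add_right {m k : Type*} [Fintype m] [Fintype k] (A B C : Matrix m k ℝ) :
    finner A (B + C) = finner A B + finner A C := by
  simp [finner, Matrix.mul_add]

lemma finner_smul_right {m k : Type*} [Fintype m] [Fintype k] (x : ℝ) (A B : Matrix m k ℝ) :
    finner A (x • B) = x * finner A B := by
  simp [finner, Matrix.mul_smul]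

lemma finner_self_nonneg {m k : Type*} [Fintype m] [Fintype k] (A : Matrix m k ℝ) :
    0 ≤ finner A A := by
  unfold finner Matrix.trace
  apply Finset.sum_nonneg
  intro j _
  simp only [Matrix.diag, Matrix.mul_apply, Matrix.transpose_apply]
  exact Finset.sum_nonneg fun i _ => mul_self_nonneg _

lemma finner_proj' {n : Type*} [Fintype n] (P Q X Y : Matrix n n ℝ)
    (hP : Pᵀ = P) (hQ : Qᵀ = Q) :
    finner X (P * Y * Q) = finner (P * X * Q) Y := by
  unfold finner
  rw [show (P * X * Q)ᵀ * Y = Q * (Xᵀ * (P * Y)) by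
    simp [Matrix.transpose_mul, hP, hQ, Matrix.mul_assoc]]
  rw [show Xᵀ * (P * Y * Q) = (Xᵀ * (P * Y)) * Q by simp [Matrix.mul_assoc]]
  rw [Matrix.trace_mul_comm]

/-- decomposition of the convex estimator of `M`. -/
theorem stmt10
    (n r : ℕ) (hn : 0 < n) (hr : 0 < r)
    (lam : ℝ) (hlam : 0 < lam)
    (Mstar E Z : Matrix (Fin n) (Fin n) ℝ) (hZ : IsBinary Z)
    (τstar : ℝ)
    (O : Matrix (Fin n) (Fin n) ℝ) (hO : O = Mstar + τstar • Z + E)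
    (Mhat : Matrix (Fin n) (Fin n) ℝ)
    (Uhat Vhat : Matrix (Fin n) (Fin r) ℝ) (shat : Fin r → ℝ)
    (hUhat : Uhatᵀ * Uhat = 1) (hVhat : Vhatᵀ * Vhat = 1)
    (hshat : ∀ i, 0 ≤ shat i)
    (hSVD : Mhat = Uhat * Matrix.diagonal shat * Vhatᵀ)
    (hZpos : 0 < fnorm (PTperp Uhat Vhat Z))
    (τhat : ℝ) (W : Matrix (Fin n) (Fin n) ℝ)
    (hfoc1 : finner Z (O - Mhat - τhat • Z) = 0)
    (hfoc2 : O - Mhat - τhat • Z = lam • (Uhat * Vhatᵀ + W))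
    (hfoc3 : PTperp Uhat Vhat W = W) :
    Mhat - Mstar
      = -(lam • (Uhat * Vhatᵀ))
        - (lam * finner Z (Uhat * Vhatᵀ) / fnorm (PTperp Uhat Vhat Z) ^ 2)
            • PTang Uhat Vhat Z
        - (finner (PTperp Uhat Vhat Z) E / fnorm (PTperp Uhat Vhat Z) ^ 2
            + finner Z (PTperp Uhat Vhat Mstar) / fnorm (PTperp Uhat Vhat Z) ^ 2)
            • PTang Uhat Vhat Z
        - PTperp Uhat Vhat Mstar + PTang Uhat Vhat E := by
  have hPsymm : (1 - Uhat * Uhatᵀ)ᵀ = (1 - Uhat * Uhatᵀ) := by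
    simp [Matrix.transpose_sub, Matrix.transpose_mul]
  have hQsymm : (1 - Vhat * Vhatᵀ)ᵀ = (1 - Vhat * Vhatᵀ) := by
    simp [Matrix.transpose_sub, Matrix.transpose_mul]
  set P : Matrix (Fin n) (Fin n) ℝ := 1 - Uhat * Uhatᵀ with hPdef
  set Q : Matrix (Fin n) (Fin n) ℝ := 1 - Vhat * Vhatᵀ with hQdef
  have hPU : P * Uhat = 0 := by
    simp [hPdef, Matrix.sub_mul, Matrix.mul_assoc, hUhat]
  have hVQ : Vhatᵀ * Q = 0 := by
    simp [hQdef, Matrix.mul_sub, ← Matrix.mul_assoc, hVhat]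
  have hPMhat : P * Mhat * Q = 0 := by
    rw [hSVD, show P * (Uhat * Matrix.diagonal shat * Vhatᵀ) * Q
        = (P * Uhat) * Matrix.diagonal shat * (Vhatᵀ * Q) by simp [Matrix.mul_assoc], hPU]
    simp
  have hPUV : P * (Uhat * Vhatᵀ) * Q = 0 := by
    rw [show P * (Uhat * Vhatᵀ) * Q = (P * Uhat) * (Vhatᵀ * Q) by simp [Matrix.mul_assoc], hPU]
    simp
  have hUUU : Uhat * Uhatᵀ * (Uhat * Uhatᵀ) = Uhat * Uhatᵀ := by
    rw [show Uhat * Uhatᵀ * (Uhat * Uhatᵀ) = Uhat * (Uhatᵀ * Uhat) * Uhatᵀ by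
      simp [Matrix.mul_assoc], hUhat]
    simp
  have hVVV : Vhat * Vhatᵀ * (Vhat * Vhatᵀ) = Vhat * Vhatᵀ := by
    rw [show Vhat * Vhatᵀ * (Vhat * Vhatᵀ) = Vhat * (Vhatᵀ * Vhat) * Vhatᵀ by
      simp [Matrix.mul_assoc], hVhat]
    simp
  have hP2 : P * P = P := by
    rw [hPdef, Matrix.sub_mul, Matrix.mul_sub, Matrix.mul_sub, hUUU]
    simp
  have hQ2 : Q * Q = Q := by
    rw [hQdef, Matrix.sub_mul, Matrix.mul_sub, Matrix.mul_sub, hVVV]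
    simp
  have hPTeq : ∀ A : Matrix (Fin n) (Fin n) ℝ, PTperp Uhat Vhat A = P * A * Q :=
    fun A => rfl
  have hW' : P * W * Q = W := hfoc3
  have hfnormsq : ∀ A : Matrix (Fin n) (Fin n) ℝ, fnorm A ^ 2 = finner A A := by
    intro A
    rw [fnorm, Real.sq_sqrt (finner_self_nonneg A)]
  have hproj : ∀ X Y : Matrix (Fin n) (Fin n) ℝ,
      finner X (P * Y * Q) = finner (P * X * Q) Y :=
    fun X Y => finner_proj' P Q X Y hPsymm hQsymm
  have hidem : P * (P * Z * Q) * Q = P * Z * Q := by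
    rw [show P * (P * Z * Q) * Q = (P * P) * Z * (Q * Q) by simp [Matrix.mul_assoc], hP2, hQ2]
  have hcval : fnorm (PTperp Uhat Vhat Z) ^ 2 = finner Z (P * Z * Q) := by
    rw [hfnormsq, hPTeq, hproj (P * Z * Q) Z, hidem, hproj Z Z]
  have hcpos : 0 < finner Z (P * Z * Q) := by
    rw [← hcval]; exact pow_pos hZpos 2
  have hfoc2' : Mstar + τstar • Z + E - Mhat - τhat • Z = lam • (Uhat * Vhatᵀ) + lam • W := by
    rw [← smul_add, ← hfoc2, hO]
  have hMdiff : Mhat - Mstar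
      = (τstar - τhat) • Z + E - lam • (Uhat * Vhatᵀ) - lam • W := by
    have h4 : Mhat - Mstar - ((τstar - τhat) • Z + E - lam • (Uhat * Vhatᵀ) - lam • W) = 0 := by
      calc Mhat - Mstar - ((τstar - τhat) • Z + E - lam • (Uhat * Vhatᵀ) - lam • W)
          = Mhat - Mstar - (τstar - τhat) • Z - E
            + (lam • (Uhat * Vhatᵀ) + lam • W) := by abel
        _ = Mhat - Mstar - (τstar - τhat) • Z - E
            + (Mstar + τstar • Z + E - Mhat - τhat • Z) := by rw [← hfoc2']
        _ = 0 := by rw [sub_smul]; abel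
    exact sub_eq_zero.mp h4
  have hlamW : lam • W
      = P * Mstar * Q + (τstar - τhat) • (P * Z * Q) + P * E * Q := by
    have h := congrArg (fun A => P * A * Q) hfoc2'
    simp only [Matrix.add_mul, Matrix.mul_add, Matrix.sub_mul, Matrix.mul_sub,
      Matrix.smul_mul, Matrix.mul_smul] at h
    rw [hPMhat, hPUV, hW'] at h
    rw [sub_smul]
    rw [show lam • W = 0 + lam • W by abel, ← smul_zero lam, ← h]
    abel
  have hfoc1' : lam * finner Z (Uhat * Vhatᵀ)
      + (finner Z (P * Mstar * Q) + (τstar - τhat) * finner Z (P * Z * Q)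
        + finner (P * Z * Q) E) = 0 := by
    have h1 : finner Z (lam • (Uhat * Vhatᵀ)) + finner Z (lam • W) = 0 := by
      rw [← finner_add_right, ← smul_add, ← hfoc2]; exact hfoc1
    rw [hlamW, finner_add_right, finner_add_right, finner_smul_right, finner_smul_right] at h1
    rw [← hproj Z E]
    linarith
  have ht : τstar - τhat
      = -(lam * finner Z (Uhat * Vhatᵀ) / finner Z (P * Z * Q)
          + (finner (P * Z * Q) E / finner Z (P * Z * Q)
            + finner Z (P * Mstar * Q) / finner Z (P * Z * Q))) := by
    have hd : finner Z (P * Z * Q) ≠ 0 := ne_of_gt hcpos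
    field_simp
    linarith [hfoc1']
  rw [hMdiff, hlamW]
  simp only [PTang, hcval]
  simp only [hPTeq]
  rw [ht]
  module


end Paper
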